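/- If X is the edge subdivision Sub_η(X₀) of a simplicial complex X₀ along an edge η, and X₀ is flag, then Sub_η(X₀) is flag. -/
import Mathlib


/-- `X` is a (finite) simplicial complex: it contains the empty face and is
closed under taking subsets of faces. -/
def IsSimplicialComplex {V : Type*} [DecidableEq V] (X : Finset (Finset V)) : Prop :=
  ∅ ∈ X ∧ ∀ σ ∈ X, ∀ τ ⊆ σ, τ ∈ X

/-- The f-polynomial `f_X(t) = ∑_{σ ∈ X} t^{#σ}` (over ℤ). -/
noncomputable def fPoly {V : Type*} (X : Finset (Finset V)) : Polynomial ℤ :=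
  ∑ σ ∈ X, Polynomial.X ^ σ.card

/-- The link of a face `σ`: all faces `τ` with `σ ∪ τ ∈ X` and `σ ∩ τ = ∅`. -/
def link {V : Type*} [DecidableEq V] (X : Finset (Finset V)) (σ : Finset V) :
    Finset (Finset V) :=
  X.filter fun τ => σ ∪ τ ∈ X ∧ Disjoint σ τ

/-- `X` is flag: every set of vertices of `X` that is a clique of the
1-skeleton of `X` is a face of `X`. -/
def IsFlag {V : Type*} [DecidableEq V] (X : Finset (Finset V)) : Prop :=
  ∀ T : Finset V, (∀ v ∈ T, {v} ∈ X) →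
    (∀ v ∈ T, ∀ w ∈ T, v ≠ w → ({v, w} : Finset V) ∈ X) → T ∈ X

/-- Subdivision of `X₀` along the edge `{s, t}`, with new vertex `e`. -/
def edgeSub {V : Type*} [DecidableEq V] (X₀ : Finset (Finset V)) (s t e : V) :
    Finset (Finset V) :=
  X₀.filter (fun σ => ¬ ({s, t} : Finset V) ⊆ σ)
    ∪ (link X₀ {s, t}).image (fun σ => σ ∪ {e})
    ∪ (link X₀ {s, t}).image (fun σ => σ ∪ {s, e})
    ∪ (link X₀ {s, t}).image (fun σ => σ ∪ {t, e})


lemma mem_edgeSub {V : Type*} [DecidableEq V] (X₀ : Finset (Finset V)) (s t e : V)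
    (τ : Finset V) :
    τ ∈ edgeSub X₀ s t e ↔
      (τ ∈ X₀ ∧ ¬ ({s, t} : Finset V) ⊆ τ) ∨
      (∃ σ ∈ link X₀ {s, t}, σ ∪ {e} = τ) ∨
      (∃ σ ∈ link X₀ {s, t}, σ ∪ ({s, e} : Finset V) = τ) ∨
      (∃ σ ∈ link X₀ {s, t}, σ ∪ ({t, e} : Finset V) = τ) := by
  simp only [edgeSub, Finset.mem_union, Finset.mem_filter, Finset.mem_image, or_assoc]

lemma mem_link {V : Type*} [DecidableEq V] (X₀ : Finset (Finset V)) (η τ : Finset V) :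
    τ ∈ link X₀ η ↔ τ ∈ X₀ ∧ η ∪ τ ∈ X₀ ∧ Disjoint η τ := by
  simp [link]

theorem stmt_9 {V : Type*} [DecidableEq V] (X₀ : Finset (Finset V)) (s t e : V)
    (hX : IsSimplicialComplex X₀) (hflag : IsFlag X₀)
    (hst : s ≠ t) (hedge : ({s, t} : Finset V) ∈ X₀)
    (he : ∀ σ ∈ X₀, e ∉ σ) :
    IsFlag (edgeSub X₀ s t e) := by
  intro T hv hp
  have heST : e ∉ ({s, t} : Finset V) := he _ hedge
  have hse : s ≠ e := by intro h; exact heST (by simp [h])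
  have hte : t ≠ e := by intro h; exact heST (by simp [h])
  -- any face of the subdivision not containing e comes from the filter part
  have hnoe : ∀ τ : Finset V, e ∉ τ → τ ∈ edgeSub X₀ s t e →
      τ ∈ X₀ ∧ ¬ ({s, t} : Finset V) ⊆ τ := by
    intro τ hτ h
    rcases (mem_edgeSub X₀ s t e τ).1 h with h | ⟨σ, hσ, hEq⟩ | ⟨σ, hσ, hEq⟩ | ⟨σ, hσ, hEq⟩
    · exact h
    · exact absurd (hEq ▸ (by simp : e ∈ σ ∪ ({e} : Finset V))) hτ
    · exact absurd (hEq ▸ (by simp : e ∈ σ ∪ ({s, e} : Finset V))) hτ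
    · exact absurd (hEq ▸ (by simp : e ∈ σ ∪ ({t, e} : Finset V))) hτ
  -- s and t cannot both lie in T
  have hnST : ¬ (s ∈ T ∧ t ∈ T) := by
    rintro ⟨hs, ht⟩
    have h1 := hp s hs t ht hst
    have h2 := hnoe _ heST h1
    exact h2.2 (subset_refl _)
  by_cases heT : e ∈ T
  · -- the case e ∈ T
    -- vertices of T other than s, t, e lie in the link
    have hvlink : ∀ v ∈ T, v ≠ s → v ≠ t → v ≠ e → ({v} : Finset V) ∈ link X₀ {s, t} := by
      intro v hvT hvs hvt hve
      have hedge' := hp v hvT e heT hve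
      rcases (mem_edgeSub X₀ s t e _).1 hedge' with h | ⟨σ, hσ, hEq⟩ | ⟨σ, hσ, hEq⟩
        | ⟨σ, hσ, hEq⟩
      · exact absurd (he _ h.1) (by simp)
      · -- σ ∪ {e} = {v, e} forces σ = {v}
        have heσ : e ∉ σ := he _ ((mem_link X₀ _ σ).1 hσ).1
        have hσv : σ = {v} := by
          apply Finset.Subset.antisymm
          · intro x hx
            have : x ∈ ({v, e} : Finset V) := hEq ▸ Finset.mem_union_left _ hx
            simp only [Finset.mem_insert, Finset.mem_singleton] at this ⊢
            rcases this with h | h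
            · exact h
            · exact absurd (h ▸ hx) heσ
          · intro x hx
            rw [Finset.mem_singleton] at hx
            rw [hx]
            have hv2 : v ∈ ({v, e} : Finset V) := by simp
            rw [← hEq] at hv2
            rcases Finset.mem_union.1 hv2 with h | h
            · exact h
            · exact absurd (Finset.mem_singleton.1 h) hve
        exact hσv ▸ hσ
      · -- impossible: s ∈ {v, e}
        have : s ∈ ({v, e} : Finset V) := hEq ▸ (by simp)
        simp only [Finset.mem_insert, Finset.mem_singleton] at this
        rcases this with h | h
        · exact absurd h.symm hvs
        · exact absurd h hse
      · have : t ∈ ({v, e} : Finset V) := hEq ▸ (by simp)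
        simp only [Finset.mem_insert, Finset.mem_singleton] at this
        rcases this with h | h
        · exact absurd h.symm hvt
        · exact absurd h hte
    -- T'' : T with s, t, e removed
    set T'' : Finset V := ((T.erase e).erase s).erase t with hT''def
    have hmemT'' : ∀ x, x ∈ T'' ↔ x ≠ t ∧ x ≠ s ∧ x ≠ e ∧ x ∈ T := by
      intro x; simp [hT''def, Finset.mem_erase]
    have hvlink' : ∀ v ∈ T'', ({v} : Finset V) ∈ link X₀ {s, t} := by
      intro v hv'
      have := (hmemT'' v).1 hv'
      exact hvlink v this.2.2.2 this.2.1 this.1 this.2.2.1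
    -- U = {s,t} ∪ T'' is a face of X₀ by flagness
    have hU : insert s (insert t T'') ∈ X₀ := by
      apply hflag
      · intro v hvU
        rcases Finset.mem_insert.1 hvU with rfl | hv'
        · exact hX.2 _ hedge {v} (by simp)
        rcases Finset.mem_insert.1 hv' with rfl | hv''
        · exact hX.2 _ hedge {v} (by simp)
        · exact ((mem_link X₀ _ _).1 (hvlink' v hv'')).1
      · intro v hvU w hwU hvw
        have key : ∀ u ∈ T'', ({s, t} : Finset V) ∪ {u} ∈ X₀ := fun u hu =>
          ((mem_link X₀ _ _).1 (hvlink' u hu)).2.1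
        rcases Finset.mem_insert.1 hvU with rfl | hv'
        · -- v = s
          rcases Finset.mem_insert.1 hwU with rfl | hw'
          · exact absurd rfl hvw
          rcases Finset.mem_insert.1 hw' with rfl | hw''
          · exact hedge
          · exact hX.2 _ (key w hw'') _ (by intro x hx; simp at hx ⊢; tauto)
        rcases Finset.mem_insert.1 hv' with rfl | hv''
        · -- v = t
          rcases Finset.mem_insert.1 hwU with rfl | hw'
          · rw [Finset.pair_comm]; exact hedge
          rcases Finset.mem_insert.1 hw' with rfl | hw''
          · exact absurd rfl hvw
          · exact hX.2 _ (key w hw'') _ (by intro x hx; simp at hx ⊢; tauto)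
        · -- v ∈ T''
          rcases Finset.mem_insert.1 hwU with rfl | hw'
          · exact hX.2 _ (key v hv'') _ (by intro x hx; simp at hx ⊢; tauto)
          rcases Finset.mem_insert.1 hw' with rfl | hw''
          · exact hX.2 _ (key v hv'') _ (by intro x hx; simp at hx ⊢; tauto)
          · -- both in T'': edge of the subdivision not containing e
            have h1 := (hmemT'' v).1 hv''
            have h2 := (hmemT'' w).1 hw''
            have hne : e ∉ ({v, w} : Finset V) := by
              simp only [Finset.mem_insert, Finset.mem_singleton]
              push_neg
              exact ⟨Ne.symm h1.2.2.1, Ne.symm h2.2.2.1⟩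
            exact (hnoe _ hne (hp v h1.2.2.2 w h2.2.2.2 hvw)).1
    have hUeq : ({s, t} : Finset V) ∪ T'' = insert s (insert t T'') := by
      ext x; simp [or_assoc]
    have hT''link : T'' ∈ link X₀ {s, t} := by
      rw [mem_link]
      refine ⟨hX.2 _ hU T'' ?_, ?_, ?_⟩
      · exact (Finset.subset_insert t T'').trans (Finset.subset_insert s _)
      · rw [hUeq]; exact hU
      · rw [Finset.disjoint_left]
        intro x hx hx'
        have h := (hmemT'' x).1 hx'
        simp only [Finset.mem_insert, Finset.mem_singleton] at hx
        rcases hx with rfl | rfl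
        · exact h.2.1 rfl
        · exact h.1 rfl
    rw [mem_edgeSub]
    by_cases hsT : s ∈ T
    · have htT : t ∉ T := fun h => hnST ⟨hsT, h⟩
      refine Or.inr (Or.inr (Or.inl ⟨T'', hT''link, ?_⟩))
      ext x
      simp only [Finset.mem_union, Finset.mem_insert, Finset.mem_singleton]
      rw [hmemT'']
      constructor
      · rintro (⟨_, _, _, hx⟩ | rfl | rfl) <;> assumption
      · intro hx
        by_cases hxs : x = s
        · exact Or.inr (Or.inl hxs)
        by_cases hxe : x = e
        · exact Or.inr (Or.inr hxe)
        have hxt : x ≠ t := fun h => htT (h ▸ hx)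
        exact Or.inl ⟨hxt, hxs, hxe, hx⟩
    · by_cases htT : t ∈ T
      · refine Or.inr (Or.inr (Or.inr ⟨T'', hT''link, ?_⟩))
        ext x
        simp only [Finset.mem_union, Finset.mem_insert, Finset.mem_singleton]
        rw [hmemT'']
        constructor
        · rintro (⟨_, _, _, hx⟩ | rfl | rfl) <;> assumption
        · intro hx
          by_cases hxt : x = t
          · exact Or.inr (Or.inl hxt)
          by_cases hxe : x = e
          · exact Or.inr (Or.inr hxe)
          have hxs : x ≠ s := fun h => hsT (h ▸ hx)
          exact Or.inl ⟨hxt, hxs, hxe, hx⟩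
      · refine Or.inr (Or.inl ⟨T'', hT''link, ?_⟩)
        ext x
        simp only [Finset.mem_union, Finset.mem_singleton]
        rw [hmemT'']
        constructor
        · rintro (⟨_, _, _, hx⟩ | rfl) <;> assumption
        · intro hx
          by_cases hxe : x = e
          · exact Or.inr hxe
          have hxs : x ≠ s := fun h => hsT (h ▸ hx)
          have hxt : x ≠ t := fun h => htT (h ▸ hx)
          exact Or.inl ⟨hxt, hxs, hxe, hx⟩
  · -- the case e ∉ T : everything stays in X₀
    have hTX : T ∈ X₀ := by
      apply hflag
      · intro v hvT
        have hve : e ∉ ({v} : Finset V) := by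
          simp only [Finset.mem_singleton]
          exact fun h => heT (h ▸ hvT)
        exact (hnoe _ hve (hv v hvT)).1
      · intro v hvT w hwT hvw
        have hve : e ∉ ({v, w} : Finset V) := by
          simp only [Finset.mem_insert, Finset.mem_singleton]
          rintro (rfl | rfl) <;> exact heT (by assumption)
        exact (hnoe _ hve (hp v hvT w hwT hvw)).1
    rw [mem_edgeSub]
    exact Or.inl ⟨hTX, fun h => hnST ⟨h (by simp), h (by simp)⟩⟩
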